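/- arXiv:1905.10587 — 3 statements merged into one kernel-verified Lean document; each statement's English description precedes it below -/
import Mathlib

section
/- Let K and K̃ be real symmetric positive semidefinite n×n matrices such that K - K̃ is positive semidefinite, and suppose ‖K - K̃‖ ≤ M·λ_{k+1}(K) for some constant M ≥ 0, where ‖·‖ is the spectral norm and λ_{k+1}(K) is the (k+1)-st largest eigenvalue of K. Let β > 0 and let S = (K̃ + βI)^{-1/2}(K + βI)(K̃ + βI)^{-1/2}, where (K̃ + βI)^{-1/2} is the inverse of the positive definite square root of K̃ + βI. Then I ≤ S ≤ (1 + M·λ_{k+1}(K)/β)·I in the Loewner order; in particular every eigenvalue of S lies in the interval [1, 1 + M·λ_{k+1}(K)/β], so the condition number of S is at most 1 + M·λ_{k+1}(K)/β. -/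
open scoped Matrix.Norms.L2Operator
open Matrix
open scoped ComplexOrder

/-- The positive semidefinite square root of a positive semidefinite matrix
(the definition `Matrix.PosSemidef.sqrt` of the older Mathlib, since removed). -/
noncomputable def Matrix.PosSemidef.sqrt {n 𝕜 : Type*} [Fintype n] [DecidableEq n] [RCLike 𝕜]
    {A : Matrix n n 𝕜} (hA : A.PosSemidef) : Matrix n n 𝕜 :=
  hA.1.eigenvectorUnitary.1 * diagonal ((↑) ∘ (√·) ∘ hA.1.eigenvalues) *
  (star hA.1.eigenvectorUnitary : Matrix n n 𝕜)

private lemma aux_posSemidef_sqrt {n : ℕ} {A : Matrix (Fin n) (Fin n) ℝ} (hA : A.PosSemidef) :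
    hA.sqrt.PosSemidef := by
  unfold Matrix.PosSemidef.sqrt
  have hd : (diagonal ((↑) ∘ (√·) ∘ hA.1.eigenvalues) : Matrix (Fin n) (Fin n) ℝ).PosSemidef :=
    Matrix.PosSemidef.diagonal fun i => by simp [Real.sqrt_nonneg]
  have := hd.mul_mul_conjTranspose_same hA.1.eigenvectorUnitary.1
  rw [Matrix.star_eq_conjTranspose]
  exact this

private lemma aux_sqrt_mul_self {n : ℕ} {A : Matrix (Fin n) (Fin n) ℝ} (hA : A.PosSemidef) :
    hA.sqrt * hA.sqrt = A := by
  have hsp := hA.1.spectral_theorem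
  rw [Unitary.conjStarAlgAut_apply] at hsp
  unfold Matrix.PosSemidef.sqrt
  calc _ = hA.1.eigenvectorUnitary.1 * (diagonal ((RCLike.ofReal : ℝ → ℝ) ∘ (√·) ∘ hA.1.eigenvalues) *
        ((star hA.1.eigenvectorUnitary : Matrix (Fin n) (Fin n) ℝ) * hA.1.eigenvectorUnitary.1) *
        diagonal ((RCLike.ofReal : ℝ → ℝ) ∘ (√·) ∘ hA.1.eigenvalues)) *
        (star hA.1.eigenvectorUnitary : Matrix (Fin n) (Fin n) ℝ) := by
          simp only [Matrix.mul_assoc]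
    _ = A := by
      rw [Unitary.coe_star_mul_self, Matrix.mul_one, diagonal_mul_diagonal]
      conv_rhs => rw [hsp]
      congr 3
      funext i
      simp [Real.mul_self_sqrt (hA.eigenvalues_nonneg i)]

private lemma aux_smul_psd {n : ℕ} {A : Matrix (Fin n) (Fin n) ℝ} (hA : A.PosSemidef)
    {c : ℝ} (hc : 0 ≤ c) : (c • A).PosSemidef := by
  refine Matrix.PosSemidef.of_dotProduct_mulVec_nonneg ?_ fun x => ?_
  · unfold Matrix.IsHermitian
    rw [conjTranspose_smul, hA.1.eq]
    simp
  · rw [smul_mulVec, dotProduct_smul]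
    exact mul_nonneg hc (hA.dotProduct_mulVec_nonneg x)

/-- Rayleigh: eigenvalue of a PSD matrix w.r.t. a nonzero eigenvector is nonneg. -/
private lemma aux_eig_nonneg {n : ℕ} {P : Matrix (Fin n) (Fin n) ℝ} (hP : P.PosSemidef)
    {v : Fin n → ℝ} (hv : v ≠ 0) {t : ℝ} (ht : P *ᵥ v = t • v) : 0 ≤ t := by
  have h1 : 0 ≤ dotProduct (star v) (P *ᵥ v) := hP.dotProduct_mulVec_nonneg v
  rw [ht] at h1
  have hvv : 0 < dotProduct v v := by
    have h0 : 0 ≤ dotProduct v v := Finset.sum_nonneg fun i _ => mul_self_nonneg _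
    exact lt_of_le_of_ne h0 fun h => hv (dotProduct_self_eq_zero.mp h.symm)
  simp only [star_trivial, dotProduct_smul, smul_eq_mul] at h1
  nlinarith

/-- If `D` is symmetric with `‖D‖ ≤ c` (L2 operator norm), then `c • 1 - D` is PSD. -/
private lemma aux_norm_psd {n : ℕ} {D : Matrix (Fin n) (Fin n) ℝ} (hD : D.IsHermitian)
    {c : ℝ} (hc : ‖D‖ ≤ c) : (c • (1 : Matrix (Fin n) (Fin n) ℝ) - D).PosSemidef := by
  have hc0 : 0 ≤ c := le_trans (norm_nonneg _) hc
  refine Matrix.PosSemidef.of_dotProduct_mulVec_nonneg ?_ fun x => ?_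
  · unfold Matrix.IsHermitian
    rw [conjTranspose_sub, conjTranspose_smul, hD.eq]
    simp
  · have key : dotProduct x (D *ᵥ x) ≤ c * dotProduct x x := by
      set y : EuclideanSpace ℝ (Fin n) := (EuclideanSpace.equiv (Fin n) ℝ).symm x
      set z : EuclideanSpace ℝ (Fin n) := (EuclideanSpace.equiv (Fin n) ℝ).symm (D *ᵥ x)
      have h1 : dotProduct x (D *ᵥ x) = inner ℝ y z := by
        rw [EuclideanSpace.inner_eq_star_dotProduct]
        exact dotProduct_comm _ _
      have h2 : (inner ℝ y z : ℝ) ≤ ‖y‖ * ‖z‖ := real_inner_le_norm y z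
      have h3 : ‖z‖ ≤ ‖D‖ * ‖y‖ := D.l2_opNorm_mulVec y
      have h4 : dotProduct x x = ‖y‖ * ‖y‖ := by
        rw [← real_inner_self_eq_norm_mul_norm y, EuclideanSpace.inner_eq_star_dotProduct]
        rfl
      rw [h1, h4]
      calc (inner ℝ y z : ℝ) ≤ ‖y‖ * ‖z‖ := h2
        _ ≤ ‖y‖ * (‖D‖ * ‖y‖) := by
            exact mul_le_mul_of_nonneg_left h3 (norm_nonneg _)
        _ ≤ c * (‖y‖ * ‖y‖) := by nlinarith [norm_nonneg y, norm_nonneg (D : Matrix _ _ ℝ)]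
    rw [sub_mulVec, dotProduct_sub, smul_mulVec, one_mulVec, dotProduct_smul]
    simp only [star_trivial, smul_eq_mul]
    linarith

/-- If `K, K̃` are real symmetric PSD `n × n` matrices with `K - K̃` PSD and
`‖K - K̃‖ ≤ M · λ_{k+1}(K)` (spectral norm, eigenvalues in descending order `μ`), `β > 0`, and
`S = (K̃ + βI)^{-1/2} (K + βI) (K̃ + βI)^{-1/2}`, then `I ≤ S ≤ (1 + M λ_{k+1}(K)/β) I` in the
Loewner order; in particular every eigenvalue of `S` lies in `[1, 1 + M λ_{k+1}(K)/β]` and the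
condition number of `S` is at most `1 + M λ_{k+1}(K)/β`. -/
theorem stmt0 {n k : ℕ} (hk : k < n)
    (K Kt : Matrix (Fin n) (Fin n) ℝ)
    (hK : K.PosSemidef) (hKt : Kt.PosSemidef)
    (hdiff : (K - Kt).PosSemidef)
    (M : ℝ) (hM : 0 ≤ M)
    (μ : Fin n → ℝ) (hμanti : Antitone μ)
    (hμ : ∃ e : Equiv.Perm (Fin n), ∀ i, μ i = hK.isHermitian.eigenvalues (e i))
    (hnorm : ‖K - Kt‖ ≤ M * μ ⟨k, hk⟩)
    (β : ℝ) (hβ : 0 < β)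
    (h₁ : (Kt + β • (1 : Matrix (Fin n) (Fin n) ℝ)).PosSemidef)
    (S : Matrix (Fin n) (Fin n) ℝ)
    (hS : S = h₁.sqrt⁻¹ * (K + β • (1 : Matrix (Fin n) (Fin n) ℝ)) * h₁.sqrt⁻¹) :
    (S - 1).PosSemidef ∧
    ((1 + M * μ ⟨k, hk⟩ / β) • (1 : Matrix (Fin n) (Fin n) ℝ) - S).PosSemidef ∧
    ∀ (hSh : S.IsHermitian),
      (∀ i, hSh.eigenvalues i ∈ Set.Icc 1 (1 + M * μ ⟨k, hk⟩ / β)) ∧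
      (⨆ i, hSh.eigenvalues i) / (⨅ i, hSh.eigenvalues i) ≤ 1 + M * μ ⟨k, hk⟩ / β := by
  -- basic nonnegativity
  have hμk : 0 ≤ μ ⟨k, hk⟩ := by
    obtain ⟨e, he⟩ := hμ
    rw [he]
    exact hK.eigenvalues_nonneg _
  have hMμ : 0 ≤ M * μ ⟨k, hk⟩ := mul_nonneg hM hμk
  set c : ℝ := 1 + M * μ ⟨k, hk⟩ / β with hc
  have hc1 : 1 ≤ c := by
    have h0 : 0 ≤ M * μ ⟨k, hk⟩ / β := div_nonneg hMμ hβ.le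
    rw [hc]
    linarith
  -- the positive definite matrix Kt + βI and its square root
  have hβ1 : (β • (1 : Matrix (Fin n) (Fin n) ℝ)).PosDef := by
    refine Matrix.PosDef.of_dotProduct_mulVec_pos ?_ fun x hx => ?_
    · unfold Matrix.IsHermitian
      rw [conjTranspose_smul, conjTranspose_one]
      simp
    · rw [smul_mulVec, one_mulVec, dotProduct_smul]
      have : 0 < dotProduct (star x) x := by
        simp only [star_trivial]
        have h0 : 0 ≤ dotProduct x x := Finset.sum_nonneg fun i _ => mul_self_nonneg _
        exact lt_of_le_of_ne h0 fun h => hx (dotProduct_self_eq_zero.mp h.symm)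
      simpa using mul_pos hβ this
  have hpd : (Kt + β • (1 : Matrix (Fin n) (Fin n) ℝ)).PosDef :=
    Matrix.PosDef.posSemidef_add hKt hβ1
  set B : Matrix (Fin n) (Fin n) ℝ := h₁.sqrt with hB
  have hBpsd : B.PosSemidef := aux_posSemidef_sqrt h₁
  have hBB : B * B = Kt + β • 1 := aux_sqrt_mul_self h₁
  have hBunit : IsUnit B := by
    have hdet : IsUnit B.det := by
      have h2 : B.det * B.det = (Kt + β • (1 : Matrix (Fin n) (Fin n) ℝ)).det := by
        rw [← det_mul, hBB]
      have := hpd.det_pos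
      have hne : B.det ≠ 0 := by
        intro h
        rw [h, mul_zero] at h2
        linarith [h2 ▸ this]
      exact hne.isUnit
    exact (Matrix.isUnit_iff_isUnit_det _).2 hdet
  have hBinv : B * B⁻¹ = 1 := mul_nonsing_inv _ ((Matrix.isUnit_iff_isUnit_det _).1 hBunit)
  have hinvB : B⁻¹ * B = 1 := nonsing_inv_mul _ ((Matrix.isUnit_iff_isUnit_det _).1 hBunit)
  have hBinvH : (B⁻¹)ᴴ = B⁻¹ := by
    rw [conjTranspose_nonsing_inv, hBpsd.1.eq]
  -- key conjugation identity
  have hconj : ∀ A : Matrix (Fin n) (Fin n) ℝ, A.PosSemidef → (B⁻¹ * A * B⁻¹).PosSemidef := by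
    intro A hA
    have := hA.mul_mul_conjTranspose_same B⁻¹
    rwa [hBinvH] at this
  -- S - 1 = B⁻¹ (K - Kt) B⁻¹
  have h2 : B⁻¹ * (Kt + β • (1 : Matrix (Fin n) (Fin n) ℝ)) * B⁻¹ = 1 := by
    rw [← hBB, ← Matrix.mul_assoc, Matrix.mul_assoc B⁻¹ B B, ← Matrix.mul_assoc B⁻¹,
      hinvB, Matrix.one_mul, hBinv]
  have hS1 : S - 1 = B⁻¹ * (K - Kt) * B⁻¹ := by
    calc S - 1 = B⁻¹ * (K + β • 1) * B⁻¹ - B⁻¹ * (Kt + β • 1) * B⁻¹ := by rw [hS, h2]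
      _ = B⁻¹ * ((K + β • 1) - (Kt + β • 1)) * B⁻¹ := by
          rw [Matrix.mul_sub, Matrix.sub_mul]
      _ = B⁻¹ * (K - Kt) * B⁻¹ := by congr 2; abel
  have part1 : (S - 1).PosSemidef := by
    rw [hS1]; exact hconj _ hdiff
  -- c•1 - S = B⁻¹ (c(Kt+β1) - (K+β1)) B⁻¹
  have hS2 : c • (1 : Matrix (Fin n) (Fin n) ℝ) - S
      = B⁻¹ * ((M * μ ⟨k, hk⟩) • (1 : Matrix (Fin n) (Fin n) ℝ) - (K - Kt)
          + (M * μ ⟨k, hk⟩ / β) • Kt) * B⁻¹ := by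
    have h1 : B⁻¹ * (c • (Kt + β • (1 : Matrix (Fin n) (Fin n) ℝ))) * B⁻¹
        = c • (1 : Matrix (Fin n) (Fin n) ℝ) := by
      rw [Matrix.mul_smul, Matrix.smul_mul, h2]
    have hβne : β ≠ 0 := hβ.ne'
    calc c • (1 : Matrix (Fin n) (Fin n) ℝ) - S
        = B⁻¹ * (c • (Kt + β • 1)) * B⁻¹ - B⁻¹ * (K + β • 1) * B⁻¹ := by rw [hS, h1]
      _ = B⁻¹ * (c • (Kt + β • 1) - (K + β • 1)) * B⁻¹ := by
          rw [Matrix.mul_sub, Matrix.sub_mul]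
      _ = _ := by
          congr 2
          rw [hc]
          match_scalars <;> field_simp <;> ring
  have hmid : ((M * μ ⟨k, hk⟩) • (1 : Matrix (Fin n) (Fin n) ℝ) - (K - Kt)
      + (M * μ ⟨k, hk⟩ / β) • Kt).PosSemidef := by
    refine Matrix.PosSemidef.add ?_ ?_
    · exact aux_norm_psd hdiff.1 hnorm
    · exact aux_smul_psd hKt (div_nonneg hMμ hβ.le)
  have part2 : (c • (1 : Matrix (Fin n) (Fin n) ℝ) - S).PosSemidef := by
    rw [hS2]; exact hconj _ hmid
  refine ⟨part1, part2, fun hSh => ?_⟩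
  haveI : Nonempty (Fin n) := ⟨⟨k, hk⟩⟩
  have hbound : ∀ i, hSh.eigenvalues i ∈ Set.Icc 1 c := by
    intro i
    set v : Fin n → ℝ := ⇑(hSh.eigenvectorBasis i) with hv
    have hvne : v ≠ 0 := by
      intro h
      exact hSh.eigenvectorBasis.orthonormal.ne_zero i (by ext j; exact congrFun h j)
    have heig : S *ᵥ v = hSh.eigenvalues i • v := hSh.mulVec_eigenvectorBasis i
    constructor
    · have h1 : (S - 1) *ᵥ v = (hSh.eigenvalues i - 1) • v := by
        rw [sub_mulVec, heig, one_mulVec, sub_smul, one_smul]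
      have := aux_eig_nonneg part1 hvne h1
      linarith
    · have h2 : (c • (1 : Matrix (Fin n) (Fin n) ℝ) - S) *ᵥ v
          = (c - hSh.eigenvalues i) • v := by
        rw [sub_mulVec, heig, smul_mulVec, one_mulVec, sub_smul]
      have := aux_eig_nonneg part2 hvne h2
      linarith
  refine ⟨hbound, ?_⟩
  have hsup : (⨆ i, hSh.eigenvalues i) ≤ c := ciSup_le fun i => (hbound i).2
  have hinf : 1 ≤ (⨅ i, hSh.eigenvalues i) := le_ciInf fun i => (hbound i).1
  have hsup0 : 0 ≤ (⨆ i, hSh.eigenvalues i) := by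
    have : (1 : ℝ) ≤ hSh.eigenvalues (Classical.arbitrary _) := (hbound _).1
    have hle : hSh.eigenvalues (Classical.arbitrary _) ≤ ⨆ i, hSh.eigenvalues i :=
      le_ciSup (Set.Finite.bddAbove (Set.finite_range _)) _
    linarith
  calc (⨆ i, hSh.eigenvalues i) / (⨅ i, hSh.eigenvalues i)
      ≤ (⨆ i, hSh.eigenvalues i) := div_le_self hsup0 hinf
    _ ≤ c := hsup
end

section
/- Let A ∈ ℝ^{m×n}, let C ∈ ℝ^{m×k}, V ∈ ℝ^{n×k}, W ∈ ℝ^{m×k}, and R ∈ ℝ^{k×n}, and suppose A = C·Vᵀ + E and A = W·R + Ẽ for error matrices E, Ẽ. Suppose R has full row rank k, so that R·Rᵀ is invertible, and let R† = Rᵀ·(R·Rᵀ)^{-1} denote its Moore–Penrose pseudoinverse. Define U = Vᵀ·R† ∈ ℝ^{k×k}. Then ‖A - C·U·R‖ ≤ ‖E‖ + ‖Ẽ‖, where ‖·‖ is the spectral norm. -/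
open scoped Matrix.Norms.L2Operator
open Matrix

lemma aux_isUnit_of_rank_eq {k : ℕ} (B : Matrix (Fin k) (Fin k) ℝ) (h : B.rank = k) :
    IsUnit B := by
  rw [← Matrix.mulVec_surjective_iff_isUnit]
  have hr : LinearMap.range B.mulVecLin = ⊤ := by
    apply Submodule.eq_top_of_finrank_eq
    rw [show Module.finrank ℝ (LinearMap.range B.mulVecLin) = B.rank from rfl, h,
      Module.finrank_pi, Fintype.card_fin]
  intro y
  obtain ⟨x, hx⟩ := LinearMap.range_eq_top.mp hr y
  exact ⟨x, hx⟩

lemma aux_proj_norm_le {k : ℕ} (Q : Matrix (Fin k) (Fin k) ℝ)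
    (hsymm : Qᵀ = Q) (hidem : Q * Q = Q) : ‖Q‖ ≤ 1 := by
  have hH : Qᴴ = Q := by
    ext i j
    simpa [Matrix.conjTranspose_apply] using congrFun (congrFun hsymm i) j
  have h2 : ‖Q‖ * ‖Q‖ = ‖Q‖ := by
    rw [← Matrix.l2_opNorm_conjTranspose_mul_self, hH, hidem]
  nlinarith [norm_nonneg Q]

/-- Let `A = C Vᵀ + E = W R + Ẽ`, where `R ∈ ℝ^{k×n}` has full row rank `k`
(so `R Rᵀ` is invertible), and let `U = Vᵀ R†` with `R† = Rᵀ (R Rᵀ)⁻¹`. Then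
`‖A - C U R‖ ≤ ‖E‖ + ‖Ẽ‖` in the spectral norm. -/
theorem stmt6 {m n k : ℕ}
    (A : Matrix (Fin m) (Fin n) ℝ) (C : Matrix (Fin m) (Fin k) ℝ)
    (V : Matrix (Fin n) (Fin k) ℝ) (W : Matrix (Fin m) (Fin k) ℝ)
    (R : Matrix (Fin k) (Fin n) ℝ)
    (E Et : Matrix (Fin m) (Fin n) ℝ)
    (hE : A = C * Vᵀ + E) (hEt : A = W * R + Et)
    (hR : R.rank = k) :
    ‖A - C * (Vᵀ * (Rᵀ * (R * Rᵀ)⁻¹)) * R‖ ≤ ‖E‖ + ‖Et‖ := by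
  have hu : IsUnit (R * Rᵀ) := by
    apply aux_isUnit_of_rank_eq
    rw [Matrix.rank_self_mul_transpose, hR]
  have hud : IsUnit (R * Rᵀ).det := (Matrix.isUnit_iff_isUnit_det _).mp hu
  have hinv : (R * Rᵀ) * (R * Rᵀ)⁻¹ = 1 := Matrix.mul_nonsing_inv _ hud
  set P : Matrix (Fin n) (Fin n) ℝ := Rᵀ * (R * Rᵀ)⁻¹ * R with hP
  have hRP : R * P = R := by
    rw [hP, ← Matrix.mul_assoc, ← Matrix.mul_assoc, hinv, Matrix.one_mul]
  have hPsymm : Pᵀ = P := by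
    have hG : ((R * Rᵀ)⁻¹)ᵀ = (R * Rᵀ)⁻¹ := by
      rw [Matrix.transpose_nonsing_inv, Matrix.transpose_mul, Matrix.transpose_transpose]
    rw [hP, Matrix.transpose_mul, Matrix.transpose_mul, hG, Matrix.transpose_transpose,
      Matrix.mul_assoc]
  have hPidem : P * P = P := by
    conv_lhs => rw [hP, Matrix.mul_assoc, hRP]
  have h1mP : (1 - P)ᵀ = 1 - P := by rw [Matrix.transpose_sub, Matrix.transpose_one, hPsymm]
  have h1mPidem : (1 - P) * (1 - P) = 1 - P := by
    simp only [sub_mul, mul_sub, one_mul, mul_one, hPidem]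
    abel
  have key : A - C * (Vᵀ * (Rᵀ * (R * Rᵀ)⁻¹)) * R = Et * (1 - P) + E * P := by
    have hCV : C * Vᵀ = A - E := by rw [hE]; abel
    have h1 : C * (Vᵀ * (Rᵀ * (R * Rᵀ)⁻¹)) * R = (A - E) * P := by
      rw [← hCV, hP]
      simp only [Matrix.mul_assoc]
    rw [h1]
    have h2 : W * R * P = W * R := by rw [Matrix.mul_assoc, hRP]
    calc A - (A - E) * P = A * (1 - P) + E * P := by
          simp only [Matrix.sub_mul, Matrix.mul_sub, Matrix.mul_one, Matrix.one_mul]; abel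
      _ = Et * (1 - P) + E * P := by
          rw [hEt, Matrix.add_mul, Matrix.mul_sub, Matrix.mul_one, h2]
          abel
  rw [key]
  calc ‖Et * (1 - P) + E * P‖ ≤ ‖Et * (1 - P)‖ + ‖E * P‖ := norm_add_le _ _
    _ ≤ ‖Et‖ * ‖1 - P‖ + ‖E‖ * ‖P‖ :=
        add_le_add (Matrix.l2_opNorm_mul _ _) (Matrix.l2_opNorm_mul _ _)
    _ ≤ ‖Et‖ * 1 + ‖E‖ * 1 := by
        gcongr
        · exact aux_proj_norm_le _ h1mP h1mPidem
        · exact aux_proj_norm_le _ hPsymm hPidem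
    _ = ‖E‖ + ‖Et‖ := by ring
end

section
/- Let K ∈ ℝ^{n×n} be symmetric and suppose K = C·Vᵀ + E, where C ∈ ℝ^{n×k} has full column rank (so CᵀC is invertible), V ∈ ℝ^{n×k}, and E is an error matrix. Define U = Vᵀ·C·(Cᵀ·C)^{-1} ∈ ℝ^{k×k}. Then ‖K - C·U·Cᵀ‖ ≤ 2‖E‖, where ‖·‖ is the spectral norm. In particular, if additionally ‖E‖ ≤ p·σ_{k+1}(K) for some p ≥ 0, where σ_{k+1}(K) is the (k+1)-st largest singular value of K, then ‖K - C·U·Cᵀ‖ ≤ 2·p·σ_{k+1}(K). -/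
open scoped Matrix.Norms.L2Operator
open Matrix

theorem Matrix.isHermitian_transpose_mul_self {m n α : Type*} [Fintype m] [NonUnitalSemiring α]
    [StarRing α] [TrivialStar α] (A : Matrix m n α) : (Aᵀ * A).IsHermitian := by
  simpa [conjTranspose_eq_transpose_of_trivial] using isHermitian_conjTranspose_mul_self A

lemma isUnit_of_rank_eq_card {k : ℕ} (A : Matrix (Fin k) (Fin k) ℝ)
    (h : A.rank = k) : IsUnit A := by
  rw [← Matrix.mulVec_surjective_iff_isUnit]
  have : LinearMap.range A.mulVecLin = ⊤ := by
    apply Submodule.eq_top_of_finrank_eq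
    simpa [Matrix.rank] using h
  intro v
  obtain ⟨x, hx⟩ := LinearMap.range_eq_top.mp this v
  exact ⟨x, hx⟩

/-- norm of a real symmetric idempotent matrix is at most 1 -/
lemma norm_le_one_of_symm_idem {n : ℕ} (P : Matrix (Fin n) (Fin n) ℝ)
    (hsym : Pᵀ = P) (hidem : P * P = P) : ‖P‖ ≤ 1 := by
  have h1 : ‖P‖ * ‖P‖ = ‖P‖ := by
    have := Matrix.l2_opNorm_conjTranspose_mul_self P
    rw [show Pᴴ = Pᵀ from rfl, hsym, hidem] at this
    linarith
  nlinarith [norm_nonneg P]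

/-- Let `K ∈ ℝ^{n×n}` be symmetric with `K = C Vᵀ + E`, where `C` has full
column rank `k` (so `Cᵀ C` is invertible), and let `U = Vᵀ C (Cᵀ C)⁻¹`. Then
`‖K - C U Cᵀ‖ ≤ 2 ‖E‖`; in particular, if `‖E‖ ≤ p σ_{k+1}(K)` with `p ≥ 0` and singular values
`ν` of `K` in descending order (`ν i = √(λ_i(Kᴴ K))`), then `‖K - C U Cᵀ‖ ≤ 2 p σ_{k+1}(K)`. -/
theorem stmt7 {n k : ℕ} (hk : k < n)
    (K : Matrix (Fin n) (Fin n) ℝ) (hKsym : K.IsHermitian)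
    (C : Matrix (Fin n) (Fin k) ℝ) (V : Matrix (Fin n) (Fin k) ℝ)
    (E : Matrix (Fin n) (Fin n) ℝ)
    (hE : K = C * Vᵀ + E)
    (hC : C.rank = k) :
    ‖K - C * (Vᵀ * C * (Cᵀ * C)⁻¹) * Cᵀ‖ ≤ 2 * ‖E‖ ∧
    ∀ p : ℝ, 0 ≤ p →
      ∀ ν : Fin n → ℝ, Antitone ν →
        (∃ e : Equiv.Perm (Fin n), ∀ i,
          ν i = Real.sqrt ((Matrix.isHermitian_transpose_mul_self K).eigenvalues (e i))) →
        ‖E‖ ≤ p * ν ⟨k, hk⟩ →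
        ‖K - C * (Vᵀ * C * (Cᵀ * C)⁻¹) * Cᵀ‖ ≤ 2 * p * ν ⟨k, hk⟩ := by
  -- CᵀC is invertible
  have hCE : Cᵀ = Cᴴ := by ext i j; simp [Matrix.conjTranspose]
  have hrank : (Cᵀ * C).rank = k := by
    rw [hCE, Matrix.rank_conjTranspose_mul_self]; exact hC
  have hunit : IsUnit (Cᵀ * C) := isUnit_of_rank_eq_card _ hrank
  have hinv1 : (Cᵀ * C) * (Cᵀ * C)⁻¹ = 1 := Matrix.mul_nonsing_inv _ ((Matrix.isUnit_iff_isUnit_det _).mp hunit)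
  have hinv2 : (Cᵀ * C)⁻¹ * (Cᵀ * C) = 1 := Matrix.nonsing_inv_mul _ ((Matrix.isUnit_iff_isUnit_det _).mp hunit)
  set W := (Cᵀ * C)⁻¹ with hW
  set P := C * W * Cᵀ with hPdef
  -- properties of P
  have hWsym : Wᵀ = W := by
    rw [hW, Matrix.transpose_nonsing_inv]
    congr 1
    simp [Matrix.transpose_mul]
  have hPsym : Pᵀ = P := by
    rw [hPdef]
    simp [Matrix.transpose_mul, hWsym, Matrix.mul_assoc]
  have hPidem : P * P = P := by
    rw [hPdef]
    have : C * W * Cᵀ * (C * W * Cᵀ) = C * (W * (Cᵀ * C)) * (W * Cᵀ) := by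
      simp only [Matrix.mul_assoc]
    rw [this, hinv2]
    simp only [Matrix.mul_one, Matrix.mul_assoc]
  have hQsym : (1 - P)ᵀ = 1 - P := by
    rw [Matrix.transpose_sub, Matrix.transpose_one, hPsym]
  have hQidem : (1 - P) * (1 - P) = 1 - P := by
    rw [Matrix.sub_mul, Matrix.mul_sub, Matrix.mul_sub, hPidem]
    simp only [Matrix.one_mul, Matrix.mul_one]
    abel
  -- key algebraic identity
  have hKsymm : Kᵀ = K := hKsym
  have hCt : Cᵀ * (1 - P) = 0 := by
    rw [Matrix.mul_sub, Matrix.mul_one, hPdef]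
    have : Cᵀ * (C * W * Cᵀ) = (Cᵀ * C) * W * Cᵀ := by simp only [Matrix.mul_assoc]
    rw [this, hinv1, Matrix.one_mul, sub_self]
  have hkey : K - C * (Vᵀ * C * W) * Cᵀ = Eᵀ * (1 - P) + E * P := by
    have h1 : C * (Vᵀ * C * W) * Cᵀ = (C * Vᵀ) * P := by
      rw [hPdef]; simp only [Matrix.mul_assoc]
    have h2 : C * Vᵀ = K - E := by rw [hE]; abel
    have h3 : K - C * (Vᵀ * C * W) * Cᵀ = K * (1 - P) + E * P := by
      rw [h1, h2, Matrix.sub_mul, Matrix.mul_sub, Matrix.mul_one]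
      abel
    have h4 : K * (1 - P) = Eᵀ * (1 - P) := by
      conv_lhs => rw [← hKsymm, hE, Matrix.transpose_add, Matrix.transpose_mul,
        Matrix.transpose_transpose]
      rw [Matrix.add_mul, Matrix.mul_assoc, hCt, Matrix.mul_zero, zero_add]
    rw [h3, h4]
  -- norm bounds
  have hPnorm : ‖P‖ ≤ 1 := norm_le_one_of_symm_idem P hPsym hPidem
  have hQnorm : ‖(1 : Matrix (Fin n) (Fin n) ℝ) - P‖ ≤ 1 :=
    norm_le_one_of_symm_idem _ hQsym hQidem
  have hEt : ‖Eᵀ‖ = ‖E‖ := by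
    have := Matrix.l2_opNorm_conjTranspose E
    rwa [show Eᴴ = Eᵀ from rfl] at this
  have main : ‖K - C * (Vᵀ * C * W) * Cᵀ‖ ≤ 2 * ‖E‖ := by
    rw [hkey]
    calc ‖Eᵀ * (1 - P) + E * P‖ ≤ ‖Eᵀ * (1 - P)‖ + ‖E * P‖ := norm_add_le _ _
      _ ≤ ‖Eᵀ‖ * ‖(1 : Matrix (Fin n) (Fin n) ℝ) - P‖ + ‖E‖ * ‖P‖ :=
        add_le_add (Matrix.l2_opNorm_mul _ _) (Matrix.l2_opNorm_mul _ _)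
      _ ≤ ‖E‖ * 1 + ‖E‖ * 1 := by
        rw [hEt]
        exact add_le_add (mul_le_mul_of_nonneg_left hQnorm (norm_nonneg _))
          (mul_le_mul_of_nonneg_left hPnorm (norm_nonneg _))
      _ = 2 * ‖E‖ := by ring
  refine ⟨main, fun p hp ν hν hex hEbound => ?_⟩
  calc ‖K - C * (Vᵀ * C * W) * Cᵀ‖ ≤ 2 * ‖E‖ := main
    _ ≤ 2 * (p * ν ⟨k, hk⟩) := by linarith
    _ = 2 * p * ν ⟨k, hk⟩ := by ring
end
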